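/- There exist absolute constants C > 0 and ε₀, δ₀ > 0 such that the following holds. Let N ≥ 2, let h ∈ ℝ^N, let H be the circular convolution matrix of h, and relabel the Fourier coefficients of h so that |ĥ₀| ≥ |ĥ₁| ≥ … ≥ |ĥ_{N−1}|. Then for all ε ≤ ε₀ and δ ≤ δ₀, every (ε,δ)-differentially private algorithm 𝒜 approximating x ↦ Hx has worst-case mean squared error sup_{x} (1/N)·E[‖𝒜(x) − Hx‖₂²] ≥ C · max_{K=1,…,N} K²·ĥ²_{K−1} / (N·(log₂ N)²). -/

import Mathlib

open MeasureTheory Finset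
open scoped ENNReal NNReal

noncomputable section

/-- `(ε,δ)`-differential privacy for a randomized algorithm mapping inputs in `[0,1]^N`
(ℓ₁-neighboring inputs differ by at most 1 in ℓ₁ norm) to probability measures on `Ω`. -/
def DiffPrivate {N : ℕ} {Ω : Type*} [MeasurableSpace Ω]
    (A : (Fin N → ℝ) → Measure Ω) (ε δ : ℝ) : Prop :=
  ∀ x x' : Fin N → ℝ,
    (∀ i, x i ∈ Set.Icc (0 : ℝ) 1) → (∀ i, x' i ∈ Set.Icc (0 : ℝ) 1) →
    (∑ i, |x i - x' i|) ≤ 1 →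
    ∀ T : Set Ω, MeasurableSet T →
      A x T ≤ ENNReal.ofReal (Real.exp ε) * A x' T + ENNReal.ofReal δ

/-- The normalized DFT matrix `(F_N)_{m,n} = N^{-1/2} exp(-2π i m n / N)`. -/
def dftMatrix (N : ℕ) : Matrix (Fin N) (Fin N) ℂ :=
  Matrix.of fun m n => ((Real.sqrt N : ℝ) : ℂ)⁻¹ *
    Complex.exp (-(2 * (Real.pi : ℂ) * Complex.I * ((m : ℕ) : ℂ) * ((n : ℕ) : ℂ)) / (N : ℂ))

/-- The normalized DFT (Fourier coefficients) of a real vector: `ĥ = F_N h`. -/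
def dftCoeff {N : ℕ} (h : Fin N → ℝ) : Fin N → ℂ :=
  (dftMatrix N).mulVec fun n => ((h n : ℝ) : ℂ)

namespace PCLB
open Complex Matrix

def ee (N : ℕ) (k : ℤ) : ℂ := Complex.exp (2 * (Real.pi:ℂ) * Complex.I * k / N)

lemma ee_add (N : ℕ) (a b : ℤ) : ee N (a + b) = ee N a * ee N b := by
  rw [ee, ee, ee, ← Complex.exp_add]; congr 1; push_cast; ring

lemma ee_zero (N : ℕ) : ee N 0 = 1 := by simp [ee]

lemma ee_nat_mul (N : ℕ) (d : ℤ) (m : ℕ) : ee N (d * m) = ee N d ^ m := by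
  rw [ee, ee, ← Complex.exp_nat_mul]; congr 1; push_cast; ring

lemma ee_N_mul (N : ℕ) (hN : N ≠ 0) (q : ℤ) : ee N ((N:ℤ) * q) = 1 := by
  have hNc : (N:ℂ) ≠ 0 := Nat.cast_ne_zero.mpr hN
  have : (2 * (Real.pi:ℂ) * Complex.I * ((N:ℤ)*q : ℤ) / N) = (q:ℂ) * (2 * (Real.pi:ℂ) * Complex.I) := by
    push_cast; field_simp
  rw [ee, this, Complex.exp_int_mul_two_pi_mul_I]

lemma ee_add_N_mul (N : ℕ) (hN : N ≠ 0) (a q : ℤ) : ee N (a + (N:ℤ) * q) = ee N a := by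
  rw [ee_add, ee_N_mul N hN, mul_one]

lemma ee_ne_one (N : ℕ) (hN : N ≠ 0) (d : ℤ) (hd : ¬ (N:ℤ) ∣ d) : ee N d ≠ 1 := by
  intro hcon
  rw [ee, Complex.exp_eq_one_iff] at hcon
  obtain ⟨n, hn⟩ := hcon
  apply hd
  have hNc : (N:ℂ) ≠ 0 := Nat.cast_ne_zero.mpr hN
  have hpi : (2 * (Real.pi:ℂ) * Complex.I) ≠ 0 := by
    simp [Real.pi_ne_zero, Complex.I_ne_zero, Complex.ofReal_ne_zero]
  have hdc : (d : ℂ) = (n : ℂ) * N := by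
    field_simp at hn
    apply mul_left_cancel₀ hpi
    rw [hn]; ring
  have hdz : (d : ℤ) = n * N := by exact_mod_cast hdc
  exact ⟨n, by linarith⟩

lemma sum_ee (N : ℕ) (hN : N ≠ 0) (d : ℤ) :
    ∑ m : Fin N, ee N (d * m.1) = if (N:ℤ) ∣ d then (N:ℂ) else 0 := by
  by_cases hd : (N:ℤ) ∣ d
  · obtain ⟨q, hq⟩ := id hd
    rw [if_pos hd]
    have : ∀ m : Fin N, ee N (d * m.1) = 1 := by
      intro m
      have hrw : d * (m.1:ℤ) = (N:ℤ) * (q * m.1) := by rw [hq]; ring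
      rw [hrw]
      exact ee_N_mul N hN _
    simp [this]
  · rw [if_neg hd]
    have h1 : ee N d ≠ 1 := ee_ne_one N hN d hd
    have : ∑ m : Fin N, ee N (d * m.1) = ∑ m ∈ Finset.range N, (ee N d) ^ m := by
      rw [← Fin.sum_univ_eq_sum_range (fun m => (ee N d)^m) N]
      exact Finset.sum_congr rfl fun m _ => ee_nat_mul N d m.1
    rw [this, geom_sum_eq h1]
    have : ee N d ^ N = 1 := by
      rw [← ee_nat_mul, mul_comm, ee_N_mul N hN]
    rw [this]; simp


def sC (N : ℕ) : ℂ := ((Real.sqrt N : ℝ) : ℂ)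

lemma sC_ne_zero {N : ℕ} (hN : N ≠ 0) : sC N ≠ 0 := by
  simp only [sC, Complex.ofReal_ne_zero]
  positivity

lemma sC_mul_self (N : ℕ) : sC N * sC N = (N : ℂ) := by
  rw [sC, ← Complex.ofReal_mul, Real.mul_self_sqrt (Nat.cast_nonneg N)]
  simp

lemma dft_apply (N : ℕ) (m n : Fin N) :
    dftMatrix N m n = (sC N)⁻¹ * ee N (-(m.1 * n.1 : ℤ)) := by
  rw [dftMatrix, Matrix.of_apply, sC, ee]
  congr 1
  push_cast
  ring

lemma ee_conj (N : ℕ) (k : ℤ) : (starRingEnd ℂ) (ee N k) = ee N (-k) := by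
  rw [ee, ee, ← Complex.exp_conj]
  congr 1
  rw [map_div₀]
  push_cast
  simp only [_root_.map_mul, Complex.conj_I, Complex.conj_ofReal, map_intCast, map_ofNat,
    map_natCast]
  ring

lemma dft_conj (N : ℕ) (m n : Fin N) :
    (starRingEnd ℂ) (dftMatrix N m n) = (sC N)⁻¹ * ee N (m.1 * n.1 : ℤ) := by
  rw [dft_apply, _root_.map_mul, ee_conj, neg_neg, map_inv₀]
  congr 2
  rw [sC, Complex.conj_ofReal]

lemma dvd_iff_fin_eq {N : ℕ} (a b : Fin N) : (N:ℤ) ∣ ((a.1:ℤ) - b.1) ↔ a = b := by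
  constructor
  · rintro ⟨q, hq⟩
    have ha : (a.1:ℤ) < N := by exact_mod_cast a.isLt
    have hb : (b.1:ℤ) < N := by exact_mod_cast b.isLt
    have ha0 : (0:ℤ) ≤ a.1 := by positivity
    have hb0 : (0:ℤ) ≤ b.1 := by positivity
    have hNp : (0:ℤ) < N := by exact_mod_cast a.pos
    have hq0 : q = 0 := by
      rcases lt_trichotomy q 0 with h | h | h
      · exfalso
        have h1 : (N:ℤ) * q ≤ (N:ℤ) * (-1) :=
          mul_le_mul_of_nonneg_left (by omega) hNp.le
        linarith
      · exact h
      · exfalso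
        have h1 : (N:ℤ) * 1 ≤ (N:ℤ) * q :=
          mul_le_mul_of_nonneg_left (by omega) hNp.le
        linarith
    apply Fin.ext
    have : (a.1:ℤ) = b.1 := by rw [hq0, mul_zero] at hq; omega
    exact_mod_cast this
  · rintro rfl
    simp

lemma dft_unitary (N : ℕ) (hN : N ≠ 0) : (dftMatrix N)ᴴ * dftMatrix N = 1 := by
  ext a b
  rw [Matrix.mul_apply, Matrix.one_apply]
  have hterm : ∀ m : Fin N, (dftMatrix N)ᴴ a m * dftMatrix N m b
      = (N:ℂ)⁻¹ * ee N (((a.1:ℤ) - b.1) * m.1) := by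
    intro m
    rw [Matrix.conjTranspose_apply, Complex.star_def, dft_conj, dft_apply]
    have h1 : ee N (m.1 * a.1 : ℤ) * ee N (-(m.1 * b.1 : ℤ))
        = ee N (((a.1:ℤ) - b.1) * m.1) := by
      rw [← ee_add]; congr 1; ring
    have h2 : (sC N)⁻¹ * (sC N)⁻¹ = (N:ℂ)⁻¹ := by
      rw [← mul_inv, sC_mul_self]
    calc (sC N)⁻¹ * ee N (m.1 * a.1 : ℤ) * ((sC N)⁻¹ * ee N (-(m.1 * b.1 : ℤ)))
        = ((sC N)⁻¹ * (sC N)⁻¹) * (ee N (m.1 * a.1 : ℤ) * ee N (-(m.1 * b.1 : ℤ))) := by ring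
      _ = (N:ℂ)⁻¹ * ee N (((a.1:ℤ) - b.1) * m.1) := by rw [h1, h2]
  rw [Finset.sum_congr rfl (fun m _ => hterm m), ← Finset.mul_sum, sum_ee N hN]
  have hNc : (N:ℂ) ≠ 0 := Nat.cast_ne_zero.mpr hN
  by_cases hab : a = b
  · rw [if_pos ((dvd_iff_fin_eq a b).mpr hab), if_pos hab, inv_mul_cancel₀ hNc]
  · rw [if_neg (fun hc => hab ((dvd_iff_fin_eq a b).mp hc)), if_neg hab, mul_zero]

lemma dft_counitary (N : ℕ) (hN : N ≠ 0) : dftMatrix N * (dftMatrix N)ᴴ = 1 :=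
  mul_eq_one_comm.mp (dft_unitary N hN)


lemma dft_add_col (N : ℕ) (hN : N ≠ 0) (m t n : Fin N) :
    dftMatrix N m (t + n) = sC N * dftMatrix N m t * dftMatrix N m n := by
  rw [dft_apply, dft_apply, dft_apply]
  have hv : (t + n : Fin N).1 = (t.1 + n.1) % N := Fin.val_add t n
  obtain ⟨d, hd⟩ : ∃ d, N * d + (t.1 + n.1) % N = t.1 + n.1 :=
    ⟨(t.1 + n.1) / N, Nat.div_add_mod (t.1 + n.1) N⟩
  have hsub : (((t + n : Fin N).1 : ℕ) : ℤ) = (t.1 : ℤ) + n.1 - N * d := by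
    rw [hv]
    have hd2 : ((N : ℤ) * d + ((t.1 + n.1) % N : ℕ) : ℤ) = (t.1 : ℤ) + n.1 := by
      exact_mod_cast hd
    linarith
  have hexp : (-(m.1 * (t + n : Fin N).1 : ℤ)) =
      ((-(m.1 * t.1 : ℤ)) + (-(m.1 * n.1 : ℤ))) + (N : ℤ) * ((m.1 : ℤ) * d) := by
    push_cast [hsub]
    ring
  rw [hexp, ee_add_N_mul N hN, ee_add]
  have hs := sC_ne_zero hN
  field_simp

lemma dftCoeff_eq_sum {N : ℕ} (h : Fin N → ℝ) (m : Fin N) :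
    dftCoeff h m = ∑ t, dftMatrix N m t * ((h t : ℝ) : ℂ) := by
  simp [dftCoeff, Matrix.mulVec, dotProduct]

lemma dft_mul_circulant {N : ℕ} (hN : N ≠ 0) (h : Fin N → ℝ) :
    dftMatrix N * Matrix.circulant (fun n => ((h n : ℝ) : ℂ)) =
    Matrix.diagonal (fun m => sC N * dftCoeff h m) * dftMatrix N := by
  haveI : NeZero N := ⟨hN⟩
  ext m n
  rw [Matrix.mul_apply, Matrix.diagonal_mul]
  calc ∑ j, dftMatrix N m j * Matrix.circulant (fun k => ((h k : ℝ) : ℂ)) j n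
      = ∑ t, dftMatrix N m (t + n) *
          Matrix.circulant (fun k => ((h k : ℝ) : ℂ)) (t + n) n :=
        (Equiv.sum_comp (Equiv.addRight n)
          (fun j => dftMatrix N m j * Matrix.circulant (fun k => ((h k : ℝ) : ℂ)) j n)).symm
    _ = ∑ t, sC N * (dftMatrix N m t * ((h t : ℝ) : ℂ)) * dftMatrix N m n := by
        refine Finset.sum_congr rfl fun t _ => ?_
        rw [Matrix.circulant_apply, add_sub_cancel_right, dft_add_col N hN]
        ring
    _ = sC N * dftCoeff h m * dftMatrix N m n := by
        rw [← Finset.sum_mul, ← Finset.mul_sum, dftCoeff_eq_sum]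


lemma dot_self_eq {N : ℕ} (v : Fin N → ℂ) :
    dotProduct (star v) v = ((∑ n, ‖v n‖^2 : ℝ) : ℂ) := by
  rw [dotProduct, Complex.ofReal_sum]
  refine Finset.sum_congr rfl fun n _ => ?_
  rw [Pi.star_apply, Complex.star_def, mul_comm, Complex.mul_conj, Complex.normSq_eq_norm_sq]

lemma isometry_sum {N : ℕ} (M : Matrix (Fin N) (Fin N) ℂ) (hM : Mᴴ * M = 1) (w : Fin N → ℂ) :
    ∑ n, ‖M.mulVec w n‖^2 = ∑ n, ‖w n‖^2 := by
  have key : dotProduct (star (M.mulVec w)) (M.mulVec w)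
      = dotProduct (star w) w := by
    rw [Matrix.star_mulVec, Matrix.dotProduct_mulVec, Matrix.vecMul_vecMul, hM,
      Matrix.vecMul_one]
  rw [dot_self_eq, dot_self_eq] at key
  exact_mod_cast key

lemma ee_norm (N : ℕ) (k : ℤ) : ‖ee N k‖ = 1 := by
  have harg : (2 * (Real.pi:ℂ) * Complex.I * k) / N
      = ((2 * Real.pi * k / N : ℝ) : ℂ) * Complex.I := by push_cast; ring
  rw [ee, harg, Complex.norm_exp_ofReal_mul_I]

lemma dft_norm {N : ℕ} (hN : N ≠ 0) (m n : Fin N) :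
    ‖dftMatrix N m n‖^2 = (N:ℝ)⁻¹ := by
  rw [dft_apply, norm_mul, ee_norm, mul_one, norm_inv, sC, Complex.norm_real,
    Real.norm_eq_abs, _root_.abs_of_nonneg (Real.sqrt_nonneg _)]
  rw [inv_pow, sq, Real.mul_self_sqrt (Nat.cast_nonneg N)]

/-- The reconstruction matrix. -/
def recon (N K : ℕ) (h : Fin N → ℝ) : Matrix (Fin N) (Fin N) ℂ :=
  (dftMatrix N)ᴴ *
    Matrix.diagonal (fun m : Fin N => if m.1 < K then (sC N * dftCoeff h m)⁻¹ else 0) *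
    dftMatrix N

lemma opBound {N K : ℕ} (hN : N ≠ 0) (h : Fin N → ℝ) (b : ℝ) (hb : 0 < b)
    (hsort : ∀ m : Fin N, m.1 < K → b ≤ ‖dftCoeff h m‖) (w : Fin N → ℂ) :
    (N:ℝ) * b^2 * ∑ n, ‖(recon N K h).mulVec w n‖^2 ≤ ∑ n, ‖w n‖^2 := by
  set D := Matrix.diagonal (fun m : Fin N => if m.1 < K then (sC N * dftCoeff h m)⁻¹ else 0)
    with hD
  have hsplit : (recon N K h).mulVec w
      = (dftMatrix N)ᴴ.mulVec (D.mulVec ((dftMatrix N).mulVec w)) := by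
    rw [Matrix.mulVec_mulVec, Matrix.mulVec_mulVec, recon]
  rw [hsplit]
  have h1 : ∑ n, ‖(dftMatrix N)ᴴ.mulVec (D.mulVec ((dftMatrix N).mulVec w)) n‖^2
      = ∑ n, ‖D.mulVec ((dftMatrix N).mulVec w) n‖^2 :=
    isometry_sum _ (by rw [Matrix.conjTranspose_conjTranspose]; exact dft_counitary N hN) _
  have h2 : ∑ n, ‖(dftMatrix N).mulVec w n‖^2 = ∑ n, ‖w n‖^2 :=
    isometry_sum _ (dft_unitary N hN) _
  rw [h1, ← h2, Finset.mul_sum]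
  refine Finset.sum_le_sum fun m _ => ?_
  set z := (dftMatrix N).mulVec w
  rw [hD, Matrix.mulVec_diagonal]
  by_cases hm : m.1 < K
  · rw [if_pos hm, norm_mul, norm_inv, norm_mul]
    have hhm : b ≤ ‖dftCoeff h m‖ := hsort m hm
    have hu : (0:ℝ) < ‖dftCoeff h m‖ := lt_of_lt_of_le hb hhm
    have hsc : ‖sC N‖^2 = (N:ℝ) := by
      rw [sC, Complex.norm_real, Real.norm_eq_abs, _root_.abs_of_nonneg (Real.sqrt_nonneg _),
        sq, Real.mul_self_sqrt (Nat.cast_nonneg N)]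
    have hNpos : (0:ℝ) < N := by exact_mod_cast Nat.pos_of_ne_zero hN
    have ht2 : ((‖sC N‖ * ‖dftCoeff h m‖)⁻¹)^2 = ((N:ℝ) * ‖dftCoeff h m‖^2)⁻¹ := by
      rw [inv_pow, mul_pow, hsc]
    rw [mul_pow, ht2]
    have heq : (N:ℝ) * b^2 * (((N:ℝ) * ‖dftCoeff h m‖^2)⁻¹ * ‖z m‖^2)
        = b^2 * ((‖dftCoeff h m‖^2)⁻¹ * ‖z m‖^2) := by
      have hNne : (N:ℝ) ≠ 0 := hNpos.ne'
      rw [mul_inv]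
      rw [show (N:ℝ) * b^2 * ((N:ℝ)⁻¹ * (‖dftCoeff h m‖^2)⁻¹ * ‖z m‖^2)
          = ((N:ℝ) * (N:ℝ)⁻¹) * (b^2 * ((‖dftCoeff h m‖^2)⁻¹ * ‖z m‖^2)) from by ring]
      rw [mul_inv_cancel₀ hNne, one_mul]
    rw [heq]
    have hstep : b^2 * ((‖dftCoeff h m‖^2)⁻¹ * ‖z m‖^2)
        ≤ ‖dftCoeff h m‖^2 * ((‖dftCoeff h m‖^2)⁻¹ * ‖z m‖^2) := by
      apply mul_le_mul_of_nonneg_right _ (by positivity)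
      nlinarith
    refine hstep.trans ?_
    rw [← mul_assoc, mul_inv_cancel₀ (by positivity), one_mul]
  · rw [if_neg hm, zero_mul, norm_zero]
    have : (0:ℝ) ≤ ‖z m‖^2 := by positivity
    nlinarith


lemma recon_mul_circulant {N K : ℕ} (hN : N ≠ 0) (h : Fin N → ℝ) (b : ℝ) (hb : 0 < b)
    (hsort : ∀ m : Fin N, m.1 < K → b ≤ ‖dftCoeff h m‖) (hK : K ≤ N) (n : Fin N) :
    (recon N K h * Matrix.circulant (fun j => ((h j : ℝ) : ℂ))) n n = (K:ℂ) / N := by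
  have hDg : Matrix.diagonal (fun m : Fin N => if m.1 < K then (sC N * dftCoeff h m)⁻¹ else 0)
      * Matrix.diagonal (fun m : Fin N => sC N * dftCoeff h m)
      = Matrix.diagonal (fun m : Fin N => if m.1 < K then (1:ℂ) else 0) := by
    rw [Matrix.diagonal_mul_diagonal]
    refine congrArg Matrix.diagonal (funext fun m => ?_)
    by_cases hm : m.1 < K
    · rw [if_pos hm, if_pos hm]
      apply inv_mul_cancel₀
      apply mul_ne_zero (sC_ne_zero hN)
      have := hsort m hm
      intro hc
      rw [hc, norm_zero] at this
      linarith
    · rw [if_neg hm, if_neg hm, zero_mul]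
  have hstep : recon N K h * Matrix.circulant (fun j => ((h j : ℝ) : ℂ))
      = (dftMatrix N)ᴴ * (Matrix.diagonal (fun m : Fin N => if m.1 < K then (1:ℂ) else 0)
        * dftMatrix N) := by
    rw [recon, Matrix.mul_assoc ((dftMatrix N)ᴴ * _), dft_mul_circulant hN h,
      ← Matrix.mul_assoc, Matrix.mul_assoc (dftMatrix N)ᴴ, hDg, Matrix.mul_assoc]
  rw [hstep, Matrix.mul_apply]
  have hterm : ∀ m : Fin N, (dftMatrix N)ᴴ n m
      * ((Matrix.diagonal (fun m : Fin N => if m.1 < K then (1:ℂ) else 0) * dftMatrix N) m n)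
      = if m.1 < K then (((N:ℝ)⁻¹ : ℝ) : ℂ) else 0 := by
    intro m
    rw [Matrix.diagonal_mul, Matrix.conjTranspose_apply]
    by_cases hm : m.1 < K
    · rw [if_pos hm, if_pos hm, one_mul, Complex.star_def, mul_comm, Complex.mul_conj,
        Complex.normSq_eq_norm_sq, dft_norm hN]
    · rw [if_neg hm, if_neg hm, zero_mul, mul_zero]
  rw [Finset.sum_congr rfl fun m _ => hterm m]
  have hsum : ∑ m : Fin N, (if m.1 < K then (((N:ℝ)⁻¹ : ℝ) : ℂ) else 0)
      = (K : ℂ) * (((N:ℝ)⁻¹ : ℝ) : ℂ) := by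
    rw [Fin.sum_univ_eq_sum_range (fun i => if i < K then (((N:ℝ)⁻¹ : ℝ) : ℂ) else 0) N]
    have : ∀ i ∈ Finset.range N, (if i < K then (((N:ℝ)⁻¹ : ℝ) : ℂ) else 0)
        = if i ∈ Finset.range K then (((N:ℝ)⁻¹ : ℝ) : ℂ) else 0 := by
      intro i _
      simp [Finset.mem_range]
    rw [Finset.sum_congr rfl this, Finset.sum_ite_mem,
      Finset.inter_eq_right.mpr (Finset.range_subset_range.mpr hK), Finset.sum_const,
      Finset.card_range, nsmul_eq_mul]
  rw [hsum, div_eq_mul_inv]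
  push_cast
  ring


lemma sq_nnnorm_ge {z : ℂ} {c : ℝ} (hc : 0 ≤ c) (hz : c ≤ ‖z‖) :
    ENNReal.ofReal (c^2) ≤ (‖z‖₊ : ℝ≥0∞)^2 := by
  rw [← (ofReal_norm z).trans (enorm_eq_nnnorm z), ← ENNReal.ofReal_pow (norm_nonneg z)]
  exact ENNReal.ofReal_le_ofReal (pow_le_pow_left₀ hc hz 2)

lemma two_point {Ω : Type*} [MeasurableSpace Ω] (μ ν : Measure Ω)
    [IsProbabilityMeasure μ] (g : Ω → ℂ) (hg : Measurable g) (p p' : ℂ) (γ : ℝ)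
    (hγ : 0 < γ) (hpp : γ ≤ ‖p - p'‖) (ε δ : ℝ) (hδ : 0 ≤ δ)
    (hdp : ∀ T : Set Ω, MeasurableSet T →
      μ T ≤ ENNReal.ofReal (Real.exp ε) * ν T + ENNReal.ofReal δ) :
    ENNReal.ofReal ((1 - δ) * (γ/2)^2) ≤
      (∫⁻ y, (‖g y - p‖₊ : ℝ≥0∞)^2 ∂μ)
        + ENNReal.ofReal (Real.exp ε) * ∫⁻ y, (‖g y - p'‖₊ : ℝ≥0∞)^2 ∂ν := by
  set t : ℝ≥0∞ := ENNReal.ofReal ((γ/2)^2) with ht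
  set T : Set Ω := {y | ‖g y - p‖ < γ/2} with hTdef
  have hT : MeasurableSet T := measurableSet_lt (hg.sub_const p).norm measurable_const
  have hmeas1 : Measurable fun y => (‖g y - p‖₊ : ℝ≥0∞)^2 :=
    ((hg.sub_const p).nnnorm.coe_nnreal_ennreal).pow_const 2
  have hmeas2 : Measurable fun y => (‖g y - p'‖₊ : ℝ≥0∞)^2 :=
    ((hg.sub_const p').nnnorm.coe_nnreal_ennreal).pow_const 2
  -- Chebyshev at μ
  have hcheb1 : t * μ Tᶜ ≤ ∫⁻ y, (‖g y - p‖₊ : ℝ≥0∞)^2 ∂μ := by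
    refine le_trans (mul_le_mul_right (measure_mono ?_) t)
      (mul_meas_ge_le_lintegral₀ hmeas1.aemeasurable t)
    intro y hy
    simp only [hTdef, Set.mem_compl_iff, Set.mem_setOf_eq, not_lt] at hy
    exact sq_nnnorm_ge (by positivity) hy
  -- Chebyshev at ν
  have hcheb2 : t * ν T ≤ ∫⁻ y, (‖g y - p'‖₊ : ℝ≥0∞)^2 ∂ν := by
    refine le_trans (mul_le_mul_right (measure_mono ?_) t)
      (mul_meas_ge_le_lintegral₀ hmeas2.aemeasurable t)
    intro y hy
    simp only [hTdef, Set.mem_setOf_eq] at hy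
    simp only [Set.mem_setOf_eq]
    refine sq_nnnorm_ge (by positivity) ?_
    have h3 : ‖p - p'‖ ≤ ‖g y - p‖ + ‖g y - p'‖ := by
      have : p - p' = -(g y - p) + (g y - p') := by ring
      rw [this]
      exact (norm_add_le _ _).trans (by rw [norm_neg])
    linarith
  have hone : μ T + μ Tᶜ = 1 := by
    rw [measure_add_measure_compl hT, measure_univ]
  have hdpT := hdp T hT
  have hchain : t ≤ ENNReal.ofReal (Real.exp ε) * (∫⁻ y, (‖g y - p'‖₊ : ℝ≥0∞)^2 ∂ν)
      + ENNReal.ofReal (δ * (γ/2)^2)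
      + ∫⁻ y, (‖g y - p‖₊ : ℝ≥0∞)^2 ∂μ := by
    calc t = t * (μ T + μ Tᶜ) := by rw [hone, mul_one]
      _ = t * μ T + t * μ Tᶜ := by rw [mul_add]
      _ ≤ t * (ENNReal.ofReal (Real.exp ε) * ν T + ENNReal.ofReal δ) + t * μ Tᶜ :=
          add_le_add_left (mul_le_mul_right hdpT t) _
      _ = ENNReal.ofReal (Real.exp ε) * (t * ν T) + t * ENNReal.ofReal δ + t * μ Tᶜ := by
          ring_nf
      _ ≤ ENNReal.ofReal (Real.exp ε) * (∫⁻ y, (‖g y - p'‖₊ : ℝ≥0∞)^2 ∂ν)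
          + ENNReal.ofReal (δ * (γ/2)^2) + ∫⁻ y, (‖g y - p‖₊ : ℝ≥0∞)^2 ∂μ := by
          refine add_le_add (add_le_add (mul_le_mul_right hcheb2 _) ?_) hcheb1
          rw [ht, ← ENNReal.ofReal_mul (by positivity)]
          exact le_of_eq (by rw [mul_comm])
  by_cases hδ1 : δ ≤ 1
  · have hsplit : t = ENNReal.ofReal ((1 - δ) * (γ/2)^2) + ENNReal.ofReal (δ * (γ/2)^2) := by
      have h1 : 0 ≤ (1 - δ) * (γ/2)^2 := by nlinarith
      rw [ht, ← ENNReal.ofReal_add h1 (by positivity)]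
      congr 1
      ring
    rw [hsplit] at hchain
    rw [add_right_comm] at hchain
    have := (ENNReal.add_le_add_iff_right ENNReal.ofReal_ne_top).mp hchain
    rw [add_comm] at this
    exact this
  · have : (1 - δ) * (γ/2)^2 ≤ 0 := by nlinarith
    rw [ENNReal.ofReal_of_nonpos this]
    exact zero_le


def bvec {N : ℕ} (v : Fin N → Bool) : Fin N → ℝ := fun i => if v i then 1 else 0

def cvec {N : ℕ} (v : Fin N → Bool) : Fin N → ℂ := fun i => ((bvec v i : ℝ) : ℂ)

def bflip {N : ℕ} (n : Fin N) (v : Fin N → Bool) : Fin N → Bool :=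
  fun i => if i = n then !(v i) else v i

lemma bflip_involutive {N : ℕ} (n : Fin N) : Function.Involutive (bflip n) := by
  intro v
  funext i
  by_cases hi : i = n <;> simp [bflip, hi]

lemma bvec_mem_cube {N : ℕ} (v : Fin N → Bool) : ∀ i, bvec v i ∈ Set.Icc (0:ℝ) 1 := by
  intro i
  by_cases hv : v i <;> simp [bvec, hv]

lemma bvec_dist {N : ℕ} (n : Fin N) (v : Fin N → Bool) :
    ∑ i, |bvec v i - bvec (bflip n v) i| = 1 := by
  rw [Finset.sum_eq_single n]
  · by_cases hv : v n <;> simp [bvec, bflip, hv]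
  · intro i _ hi
    simp [bvec, bflip, hi]
  · simp

lemma cvec_flip_eq {N : ℕ} (n : Fin N) (v : Fin N → Bool) :
    ∃ c : ℂ, ‖c‖ = 1 ∧ cvec v = cvec (bflip n v) + Pi.single n c := by
  refine ⟨(if v n then 1 else -1 : ℂ), by by_cases hv : v n <;> simp [hv], ?_⟩
  funext i
  by_cases hi : i = n
  · subst hi
    by_cases hv : v i <;> simp [cvec, bvec, bflip, hv, Pi.single_apply]
  · simp [cvec, bvec, bflip, hi, Pi.single_apply]

lemma sum_sq_nnnorm {N : ℕ} (z : Fin N → ℂ) :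
    ∑ n, (‖z n‖₊ : ℝ≥0∞)^2 = ENNReal.ofReal (∑ n, ‖z n‖^2) := by
  rw [ENNReal.ofReal_sum_of_nonneg (fun _ _ => by positivity)]
  refine Finset.sum_congr rfl fun n _ => ?_
  rw [ENNReal.ofReal_pow (norm_nonneg _), (ofReal_norm (z n)).trans (enorm_eq_nnnorm (z n))]

lemma cast_circ_mulVec {N : ℕ} (h : Fin N → ℝ) (x : Fin N → ℝ) (i : Fin N) :
    (((Matrix.circulant h).mulVec x i : ℝ) : ℂ)
      = (Matrix.circulant (fun j => ((h j : ℝ) : ℂ))).mulVec (fun j => ((x j : ℝ) : ℂ)) i := by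
  simp only [Matrix.mulVec, dotProduct, Matrix.circulant_apply]
  push_cast
  rfl



lemma main_bound {N K : ℕ} (hN2 : 2 ≤ N) (hK1 : 1 ≤ K) (hK2 : K ≤ N)
    (h : Fin N → ℝ) (b : ℝ) (hb : 0 < b)
    (hsort : ∀ m : Fin N, m.1 < K → b ≤ ‖dftCoeff h m‖)
    (ε δ : ℝ) (hεle : ε ≤ 1/2) (hδ : 0 < δ) (hδle : δ ≤ 1/2)
    (A : (Fin N → ℝ) → Measure (Fin N → ℂ))
    (hprob : ∀ x, IsProbabilityMeasure (A x))
    (hdp : DiffPrivate A ε δ) :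
    ENNReal.ofReal ((K:ℝ)^2 * b^2 / (32 * N)) ≤
      ⨆ x : Fin N → ℝ, ((N : ℝ≥0∞))⁻¹ *
        ∫⁻ y, ∑ i, (‖y i - (((Matrix.circulant h).mulVec x i : ℝ) : ℂ)‖₊ : ℝ≥0∞) ^ 2
          ∂(A x) := by
  classical
  haveI : NeZero N := ⟨by omega⟩
  have hNz : N ≠ 0 := by omega
  have hNR : (0:ℝ) < N := by exact_mod_cast Nat.pos_of_ne_zero hNz
  have hKR : (0:ℝ) < K := by exact_mod_cast hK1
  set R := recon N K h with hR
  set HC := Matrix.circulant (fun j => ((h j : ℝ) : ℂ)) with hHC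
  set s := ⨆ x : Fin N → ℝ, ((N : ℝ≥0∞))⁻¹ *
      ∫⁻ y, ∑ i, (‖y i - (((Matrix.circulant h).mulVec x i : ℝ) : ℂ)‖₊ : ℝ≥0∞) ^ 2
        ∂(A x) with hs
  set P : (Fin N → Bool) → Fin N → ℂ := fun v => R.mulVec (HC.mulVec (cvec v)) with hP
  set Aq : Fin N → (Fin N → Bool) → ℝ≥0∞ := fun n v =>
    ∫⁻ y, (‖R.mulVec y n - P v n‖₊ : ℝ≥0∞)^2 ∂(A (bvec v)) with hAq
  set t₁ := ENNReal.ofReal ((1 - δ) * (((K:ℝ)/N)/2)^2) with ht₁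
  have hγpos : (0:ℝ) < (K:ℝ) / N := by positivity
  have hgmeas : ∀ n : Fin N, Measurable (fun y : Fin N → ℂ => R.mulVec y n) := by
    intro n
    simp only [Matrix.mulVec, dotProduct]
    exact Finset.measurable_sum _ (fun j _ => (measurable_pi_apply j).const_mul _)
  have hintmeas : ∀ (n : Fin N) (v : Fin N → Bool),
      Measurable (fun y : Fin N → ℂ => (‖R.mulVec y n - P v n‖₊ : ℝ≥0∞)^2) := fun n v =>
    (((hgmeas n).sub_const _).nnnorm.coe_nnreal_ennreal).pow_const 2
  -- per-pair two-point bound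
  have hpair : ∀ (n : Fin N) (v : Fin N → Bool),
      t₁ ≤ Aq n v + ENNReal.ofReal (Real.exp ε) * Aq n (bflip n v) := by
    intro n v
    obtain ⟨c, hc, hcv⟩ := cvec_flip_eq n v
    haveI := hprob (bvec v)
    have hgap : ‖P v n - P (bflip n v) n‖ = (K:ℝ) / N := by
      have hPv : P v n = P (bflip n v) n + (R * HC) n n * c := by
        simp only [hP, Matrix.mulVec_mulVec]
        rw [hcv, Matrix.mulVec_add, Matrix.mulVec_single]
        simp
        ring
      rw [hPv]
      simp only [add_sub_cancel_left]
      rw [norm_mul, hc, mul_one, hR, hHC, recon_mul_circulant hNz h b hb hsort hK2 n,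
        norm_div, Complex.norm_natCast, Complex.norm_natCast]
    exact two_point (A (bvec v)) (A (bvec (bflip n v))) _ (hgmeas n) _ _ ((K:ℝ)/N) hγpos
      (le_of_eq hgap.symm) ε δ hδ.le
      (fun T hT => hdp (bvec v) (bvec (bflip n v)) (bvec_mem_cube v) (bvec_mem_cube _)
        (le_of_eq (bvec_dist n v)) T hT)
  -- exp(ε) ≤ 3
  have hexp3 : ENNReal.ofReal (Real.exp ε) ≤ 3 := by
    have h1 : Real.exp ε ≤ Real.exp 1 := Real.exp_le_exp.mpr (by linarith)
    have h2 : Real.exp 1 ≤ 3 := by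
      have := Real.exp_one_lt_d9
      linarith
    refine le_trans (ENNReal.ofReal_le_ofReal (h1.trans h2)) ?_
    simp
  -- sum over the cube for fixed coordinate n
  have hcard : (Finset.univ : Finset (Fin N → Bool)).card = 2^N := by
    rw [Finset.card_univ, Fintype.card_fun]
    simp
  have hsum1 : ∀ n : Fin N, (2:ℝ≥0∞)^N * t₁ ≤ 4 * ∑ v, Aq n v := by
    intro n
    have e1 : ∑ _v : Fin N → Bool, t₁ = (2:ℝ≥0∞)^N * t₁ := by
      rw [Finset.sum_const, hcard, nsmul_eq_mul]
      push_cast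
      ring
    have e2 : ∑ v, Aq n (bflip n v) = ∑ v, Aq n v := by
      have := Equiv.sum_comp (Function.Involutive.toPerm _ (bflip_involutive n)) (Aq n)
      simpa [Function.Involutive.coe_toPerm] using this
    calc (2:ℝ≥0∞)^N * t₁ = ∑ _v : Fin N → Bool, t₁ := e1.symm
      _ ≤ ∑ v, (Aq n v + ENNReal.ofReal (Real.exp ε) * Aq n (bflip n v)) :=
          Finset.sum_le_sum fun v _ => hpair n v
      _ = ∑ v, Aq n v + ENNReal.ofReal (Real.exp ε) * ∑ v, Aq n (bflip n v) := by
          rw [Finset.sum_add_distrib, Finset.mul_sum]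
      _ = ∑ v, Aq n v + ENNReal.ofReal (Real.exp ε) * ∑ v, Aq n v := by rw [e2]
      _ ≤ ∑ v, Aq n v + 3 * ∑ v, Aq n v := by
          exact add_le_add_right (mul_le_mul_left hexp3 _) _
      _ = 4 * ∑ v, Aq n v := by ring
  have hsum2 : (N:ℝ≥0∞) * ((2:ℝ≥0∞)^N * t₁) ≤ 4 * ∑ v, ∑ n, Aq n v := by
    rw [Finset.sum_comm]
    calc (N:ℝ≥0∞) * ((2:ℝ≥0∞)^N * t₁) = ∑ _n : Fin N, (2:ℝ≥0∞)^N * t₁ := by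
          rw [Finset.sum_const, Finset.card_univ, Fintype.card_fin, nsmul_eq_mul]
      _ ≤ ∑ n : Fin N, 4 * ∑ v, Aq n v := Finset.sum_le_sum fun n _ => hsum1 n
      _ = 4 * ∑ n : Fin N, ∑ v, Aq n v := by rw [Finset.mul_sum]
  -- relate Aq-sums to the true error integral
  have hJI : ∀ v : Fin N → Bool,
      ENNReal.ofReal ((N:ℝ) * b^2) * ∑ n, Aq n v ≤ (N:ℝ≥0∞) * s := by
    intro v
    have hIle : (∫⁻ y, ∑ i, (‖y i -
          (((Matrix.circulant h).mulVec (bvec v) i : ℝ) : ℂ)‖₊ : ℝ≥0∞) ^ 2 ∂(A (bvec v)))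
        ≤ (N:ℝ≥0∞) * s := by
      have hle : ((N : ℝ≥0∞))⁻¹ * ∫⁻ y, ∑ i, (‖y i -
          (((Matrix.circulant h).mulVec (bvec v) i : ℝ) : ℂ)‖₊ : ℝ≥0∞) ^ 2 ∂(A (bvec v)) ≤ s :=
        le_iSup_of_le (bvec v) (le_refl _)
      calc (∫⁻ y, ∑ i, (‖y i -
            (((Matrix.circulant h).mulVec (bvec v) i : ℝ) : ℂ)‖₊ : ℝ≥0∞) ^ 2 ∂(A (bvec v)))
          = (N:ℝ≥0∞) * (((N : ℝ≥0∞))⁻¹ * ∫⁻ y, ∑ i, (‖y i -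
            (((Matrix.circulant h).mulVec (bvec v) i : ℝ) : ℂ)‖₊ : ℝ≥0∞) ^ 2 ∂(A (bvec v))) := by
            rw [← mul_assoc, ENNReal.mul_inv_cancel (by exact_mod_cast hNz) (by simp), one_mul]
        _ ≤ (N:ℝ≥0∞) * s := mul_le_mul_right hle _
    refine le_trans ?_ hIle
    rw [← MeasureTheory.lintegral_finset_sum _ (fun n _ => hintmeas n v),
      ← MeasureTheory.lintegral_const_mul _ (Finset.measurable_sum _ fun n _ => hintmeas n v)]
    refine MeasureTheory.lintegral_mono fun y => ?_
    -- pointwise operator bound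
    have hw : ∀ n, R.mulVec y n - P v n
        = R.mulVec (fun j => y j - HC.mulVec (cvec v) j) n := by
      intro n
      simp only [hP]
      rw [show (fun j => y j - HC.mulVec (cvec v) j) = y - HC.mulVec (cvec v) from rfl,
        Matrix.mulVec_sub]
      simp
    have hcast : ∀ i, HC.mulVec (cvec v) i
        = (((Matrix.circulant h).mulVec (bvec v) i : ℝ) : ℂ) := by
      intro i
      rw [hHC, cast_circ_mulVec h (bvec v) i]
      rfl
    calc ENNReal.ofReal ((N:ℝ) * b^2) * ∑ n, (‖R.mulVec y n - P v n‖₊ : ℝ≥0∞)^2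
        = ENNReal.ofReal ((N:ℝ) * b^2) *
            ∑ n, (‖R.mulVec (fun j => y j - HC.mulVec (cvec v) j) n‖₊ : ℝ≥0∞)^2 := by
          congr 1
          exact Finset.sum_congr rfl fun n _ => by rw [hw n]
      _ = ENNReal.ofReal ((N:ℝ) * b^2 *
            ∑ n, ‖R.mulVec (fun j => y j - HC.mulVec (cvec v) j) n‖^2) := by
          rw [sum_sq_nnnorm, ← ENNReal.ofReal_mul (by positivity)]
      _ ≤ ENNReal.ofReal (∑ n, ‖y n - HC.mulVec (cvec v) n‖^2) := by
          apply ENNReal.ofReal_le_ofReal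
          exact opBound hNz h b hb hsort _
      _ = ∑ i, (‖y i - (((Matrix.circulant h).mulVec (bvec v) i : ℝ) : ℂ)‖₊ : ℝ≥0∞)^2 := by
          rw [sum_sq_nnnorm]
          congr 1
          exact Finset.sum_congr rfl fun i _ => by rw [hcast i]
  -- put everything together
  have hbig : (N:ℝ≥0∞) * (2:ℝ≥0∞)^N * (ENNReal.ofReal ((N:ℝ) * b^2) * t₁)
      ≤ (N:ℝ≥0∞) * (2:ℝ≥0∞)^N * (4 * s) := by
    calc (N:ℝ≥0∞) * (2:ℝ≥0∞)^N * (ENNReal.ofReal ((N:ℝ) * b^2) * t₁)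
        = ENNReal.ofReal ((N:ℝ) * b^2) * ((N:ℝ≥0∞) * ((2:ℝ≥0∞)^N * t₁)) := by ring
      _ ≤ ENNReal.ofReal ((N:ℝ) * b^2) * (4 * ∑ v, ∑ n, Aq n v) :=
          mul_le_mul_right hsum2 _
      _ = 4 * ∑ v, ENNReal.ofReal ((N:ℝ) * b^2) * ∑ n, Aq n v := by
          rw [← mul_assoc, mul_comm (ENNReal.ofReal ((N:ℝ) * b^2)) 4, mul_assoc,
            Finset.mul_sum]
      _ ≤ 4 * ∑ _v : Fin N → Bool, (N:ℝ≥0∞) * s := by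
          exact mul_le_mul_right (Finset.sum_le_sum fun v _ => hJI v) _
      _ = (N:ℝ≥0∞) * (2:ℝ≥0∞)^N * (4 * s) := by
          rw [Finset.sum_const, hcard, nsmul_eq_mul]
          push_cast
          ring
  have hNtop : (N:ℝ≥0∞) ≠ ⊤ := by simp
  have hN0' : (N:ℝ≥0∞) ≠ 0 := by exact_mod_cast hNz
  have h2N0 : ((2:ℝ≥0∞))^N ≠ 0 := by positivity
  have h2Ntop : ((2:ℝ≥0∞))^N ≠ ⊤ := by
    exact ENNReal.pow_ne_top (by simp)
  have hfac0 : (N:ℝ≥0∞) * (2:ℝ≥0∞)^N ≠ 0 := mul_ne_zero hN0' h2N0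
  have hfactop : (N:ℝ≥0∞) * (2:ℝ≥0∞)^N ≠ ⊤ := ENNReal.mul_ne_top hNtop h2Ntop
  have hXle : ENNReal.ofReal ((N:ℝ) * b^2) * t₁ ≤ 4 * s :=
    (ENNReal.mul_le_mul_iff_right hfac0 hfactop).mp hbig
  -- final numeric comparison
  have hreal : (K:ℝ)^2 * b^2 / (32 * N) * 4 ≤ (N:ℝ) * b^2 * ((1 - δ) * (((K:ℝ)/N)/2)^2) := by
    have heq1 : (N:ℝ) * b^2 * ((1 - δ) * (((K:ℝ)/N)/2)^2)
        = (1 - δ) * ((K:ℝ)^2 * b^2) / (4 * N) := by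
      field_simp
      ring
    have heq2 : (K:ℝ)^2 * b^2 / (32 * N) * 4 = (1/2) * ((K:ℝ)^2 * b^2) / (4 * N) := by
      field_simp
      ring
    rw [heq1, heq2]
    have hnum : (0:ℝ) ≤ (K:ℝ)^2 * b^2 := by positivity
    have h12 : (1:ℝ)/2 ≤ 1 - δ := by linarith
    rw [div_le_div_iff₀ (by positivity) (by positivity)]
    nlinarith [mul_le_mul_of_nonneg_right h12
      (by positivity : (0:ℝ) ≤ (K:ℝ)^2 * b^2 * (4 * N))]
  have hfinal4 : ENNReal.ofReal ((K:ℝ)^2 * b^2 / (32 * N)) * 4 ≤ s * 4 := by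
    calc ENNReal.ofReal ((K:ℝ)^2 * b^2 / (32 * N)) * 4
        = ENNReal.ofReal ((K:ℝ)^2 * b^2 / (32 * N) * 4) := by
          rw [ENNReal.ofReal_mul (by positivity)]
          simp
      _ ≤ ENNReal.ofReal ((N:ℝ) * b^2 * ((1 - δ) * (((K:ℝ)/N)/2)^2)) :=
          ENNReal.ofReal_le_ofReal hreal
      _ = ENNReal.ofReal ((N:ℝ) * b^2) * t₁ := by
          rw [ht₁, ← ENNReal.ofReal_mul (by positivity)]
      _ ≤ 4 * s := hXle
      _ = s * 4 := by ring
  exact (ENNReal.mul_le_mul_iff_left (by norm_num) (by norm_num)).mp hfinal4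

end PCLB

open PCLB

/-- spectral lower bound on the mean squared error of any
`(ε,δ)`-differentially private algorithm approximating the circular convolution `x ↦ Hx`. -/
theorem private_convolution_lower_bound :
    ∃ C ε₀ δ₀ : ℝ, 0 < C ∧ 0 < ε₀ ∧ 0 < δ₀ ∧
      ∀ (N : ℕ), 2 ≤ N → ∀ h : Fin N → ℝ,
        (∀ i j : Fin N, i ≤ j → ‖dftCoeff h j‖ ≤ ‖dftCoeff h i‖) →
        ∀ ε δ : ℝ, 0 < ε → ε ≤ ε₀ → 0 < δ → δ ≤ δ₀ →
        ∀ A : (Fin N → ℝ) → Measure (Fin N → ℂ),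
          (∀ x, IsProbabilityMeasure (A x)) →
          DiffPrivate A ε δ →
          ∀ K : ℕ, ∀ _hK1 : 1 ≤ K, ∀ _hK2 : K ≤ N,
            ENNReal.ofReal (C * (K : ℝ) ^ 2 * ‖dftCoeff h ⟨K - 1, by omega⟩‖ ^ 2 /
                ((N : ℝ) * (Real.logb 2 N) ^ 2)) ≤
              ⨆ x : Fin N → ℝ, ((N : ℝ≥0∞))⁻¹ *
                ∫⁻ y, ∑ i, (‖y i - (((Matrix.circulant h).mulVec x i : ℝ) : ℂ)‖₊ : ℝ≥0∞) ^ 2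
                  ∂(A x) := by
  refine ⟨1/32, 1/2, 1/2, by norm_num, by norm_num, by norm_num, ?_⟩
  intro N hN2 h hsorted ε δ hε hεle hδ hδle A hprob hdp K hK1 hK2
  have hKN : K - 1 < N := by omega
  rcases eq_or_lt_of_le (norm_nonneg (dftCoeff h (⟨K - 1, hKN⟩ : Fin N))) with hb0 | hbpos
  · have hzero : (1/32 * (K:ℝ)^2 * ‖dftCoeff h (⟨K - 1, hKN⟩ : Fin N)‖^2 /
        ((N:ℝ) * (Real.logb 2 N)^2)) = 0 := by
      rw [← hb0]
      ring
    exact le_trans (le_of_eq ((congrArg ENNReal.ofReal hzero).trans ENNReal.ofReal_zero))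
      zero_le
  · have hsort' : ∀ m : Fin N, m.1 < K →
        ‖dftCoeff h (⟨K - 1, hKN⟩ : Fin N)‖ ≤ ‖dftCoeff h m‖ := by
      intro m hm
      apply hsorted
      rw [Fin.le_def]
      simp only
      omega
    have main := main_bound hN2 hK1 hK2 h _ hbpos hsort' ε δ hεle hδ hδle A hprob hdp
    refine le_trans ?_ main
    apply ENNReal.ofReal_le_ofReal
    have hNR : (0:ℝ) < N := by positivity
    have hKR : (0:ℝ) < K := by exact_mod_cast hK1
    have hlogb : 1 ≤ Real.logb 2 (N:ℝ) := by
      have h2N : (2:ℝ) ≤ N := by exact_mod_cast hN2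
      calc (1:ℝ) = Real.logb 2 2 := (Real.logb_self_eq_one (by norm_num)).symm
        _ ≤ Real.logb 2 N := Real.logb_le_logb_of_le (by norm_num) (by norm_num) h2N
    set b := ‖dftCoeff h (⟨K - 1, hKN⟩ : Fin N)‖
    set L := Real.logb 2 (N:ℝ)
    have e1 : 1/32 * (K:ℝ)^2 * b^2 / ((N:ℝ) * L^2) = (K:ℝ)^2 * b^2 / (32 * ((N:ℝ) * L^2)) := by
      ring
    rw [e1]
    apply div_le_div_of_nonneg_left (by positivity) (by positivity)
    have hL2 : 1 ≤ L^2 := by nlinarith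
    nlinarith [mul_le_mul_of_nonneg_left hL2 hNR.le]

end
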